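/- Let 0 < p < 1, q > 0 and β, γ, N > 0 be real numbers. Then there exists exactly one S ∈ (0,N) with β·S^q·(N−S)^{p−1} = γ; moreover, the function S ↦ β·S^q·(N−S)^{p−1} is strictly increasing on (0,N). -/
import Mathlib

open Set Filter Topology

/-- Steady-state uniqueness in the case `0 < p < 1` of Proposition 8.2 of the paper:
for `0 < p < 1`, `q > 0` and `β, γ, N > 0` there is exactly one `S ∈ (0,N)` with
`β·S^q·(N−S)^{p−1} = γ`, and `S ↦ β·S^q·(N−S)^{p−1}` is strictly increasing on
`(0,N)`. -/
theorem stmt13 (p q β γ N : ℝ) (hp0 : 0 < p) (hp1 : p < 1) (hq : 0 < q)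
    (hβ : 0 < β) (hγ : 0 < γ) (hN : 0 < N) :
    (∃! S : ℝ, S ∈ Set.Ioo 0 N ∧ β * (S ^ q * (N - S) ^ (p - 1)) = γ) ∧
    StrictMonoOn (fun S : ℝ => β * (S ^ q * (N - S) ^ (p - 1))) (Set.Ioo 0 N) := by
  set f : ℝ → ℝ := fun S : ℝ => β * (S ^ q * (N - S) ^ (p - 1)) with hf
  -- strict monotonicity
  have hmono : StrictMonoOn f (Set.Ioo 0 N) := by
    intro x hx y hy hxy
    have h1 : x ^ q < y ^ q := Real.rpow_lt_rpow hx.1.le hxy hq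
    have h2 : (N - x) ^ (p - 1) < (N - y) ^ (p - 1) :=
      Real.rpow_lt_rpow_of_neg (by linarith [hy.2]) (by linarith) (by linarith)
    have := mul_lt_mul'' h1 h2 (Real.rpow_nonneg hx.1.le q)
      (Real.rpow_nonneg (by linarith [hx.2] : (0:ℝ) ≤ N - x) (p - 1))
    exact mul_lt_mul_of_pos_left this hβ
  -- continuity on the open interval
  have hcont : ∀ x ∈ Set.Ioo (0:ℝ) N, ContinuousAt f x := by
    intro x hx
    have h1 : ContinuousAt (fun S : ℝ => S ^ q) x :=
      Real.continuousAt_rpow_const x q (Or.inl hx.1.ne')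
    have h2 : ContinuousAt (fun S : ℝ => (N - S) ^ (p - 1)) x := by
      have : ContinuousAt (fun t : ℝ => t ^ (p - 1)) (N - x) :=
        Real.continuousAt_rpow_const _ _ (Or.inl (by linarith [hx.2] : N - x ≠ 0))
      exact this.comp (continuousAt_const.sub continuousAt_id)
    exact continuousAt_const.mul (h1.mul h2)
  -- f tends to 0 at 0
  have hzero : Tendsto f (𝓝[Set.Ioo 0 N] (0:ℝ)) (𝓝 0) := by
    have h1 : ContinuousAt (fun S : ℝ => S ^ q) 0 :=
      Real.continuousAt_rpow_const 0 q (Or.inr hq.le)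
    have h2 : ContinuousAt (fun S : ℝ => (N - S) ^ (p - 1)) 0 := by
      have : ContinuousAt (fun t : ℝ => t ^ (p - 1)) (N - 0) :=
        Real.continuousAt_rpow_const _ _ (Or.inl (by simpa using hN.ne'))
      exact this.comp (continuousAt_const.sub continuousAt_id)
    have hc : ContinuousAt f 0 := continuousAt_const.mul (h1.mul h2)
    have hval : f 0 = 0 := by
      simp [hf, Real.zero_rpow hq.ne']
    have := hc.tendsto
    rw [hval] at this
    exact this.mono_left nhdsWithin_le_nhds
  -- f tends to ∞ at N
  have hinf : Tendsto f (𝓝[Set.Ioo 0 N] N) atTop := by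
    have hpow : Tendsto (fun t : ℝ => t ^ (p - 1)) (𝓝[>] (0:ℝ)) atTop := by
      have hbase : Tendsto (fun t : ℝ => t ^ (1 - p)) (𝓝[>] (0:ℝ)) (𝓝[>] 0) := by
        apply tendsto_nhdsWithin_of_tendsto_nhds_of_eventually_within
        · have hc : ContinuousAt (fun t : ℝ => t ^ (1 - p)) 0 :=
            Real.continuousAt_rpow_const 0 (1 - p) (Or.inr (by linarith))
          have := hc.tendsto
          rw [Real.zero_rpow (by linarith : (1:ℝ) - p ≠ 0)] at this
          exact this.mono_left nhdsWithin_le_nhds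
        · filter_upwards [self_mem_nhdsWithin] with t ht
          exact Real.rpow_pos_of_pos ht _
      have hinv := tendsto_inv_nhdsGT_zero.comp hbase
      refine hinv.congr' ?_
      filter_upwards [self_mem_nhdsWithin] with t (ht : (0:ℝ) < t)
      simp only [Function.comp]
      rw [← Real.rpow_neg ht.le]
      ring_nf
    have hsub : Tendsto (fun S : ℝ => N - S) (𝓝[Set.Ioo 0 N] N) (𝓝[>] (0:ℝ)) := by
      apply tendsto_nhdsWithin_of_tendsto_nhds_of_eventually_within
      · have : Tendsto (fun S : ℝ => N - S) (𝓝 N) (𝓝 (N - N)) :=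
          (continuous_const.sub continuous_id).tendsto N
        simpa using this.mono_left nhdsWithin_le_nhds
      · filter_upwards [self_mem_nhdsWithin] with S hS
        exact sub_pos.mpr hS.2
    have hpart : Tendsto (fun S : ℝ => (N - S) ^ (p - 1)) (𝓝[Set.Ioo 0 N] N) atTop :=
      hpow.comp hsub
    have hSq : Tendsto (fun S : ℝ => β * S ^ q) (𝓝[Set.Ioo 0 N] N) (𝓝 (β * N ^ q)) := by
      have hc : ContinuousAt (fun S : ℝ => β * S ^ q) N :=
        continuousAt_const.mul (Real.continuousAt_rpow_const N q (Or.inl hN.ne'))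
      exact hc.tendsto.mono_left nhdsWithin_le_nhds
    have hprod := Filter.Tendsto.pos_mul_atTop (mul_pos hβ (Real.rpow_pos_of_pos hN q)) hSq hpart
    refine hprod.congr fun S => ?_
    ring
  -- pick a with f a < γ and b with γ < f b
  have hnebot0 : (𝓝[Set.Ioo 0 N] (0:ℝ)).NeBot := by
    apply mem_closure_iff_nhdsWithin_neBot.mp
    rw [closure_Ioo hN.ne]
    exact ⟨le_refl 0, hN.le⟩
  have hnebotN : (𝓝[Set.Ioo 0 N] N).NeBot := by
    apply mem_closure_iff_nhdsWithin_neBot.mp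
    rw [closure_Ioo hN.ne]
    exact ⟨hN.le, le_refl N⟩
  obtain ⟨a, hfa, ha⟩ := ((hzero.eventually_lt_const hγ).and self_mem_nhdsWithin).exists
  obtain ⟨b, hfb, hb⟩ := ((hinf.eventually_gt_atTop γ).and self_mem_nhdsWithin).exists
  have hab : a < b := by
    by_contra h
    push_neg at h
    have : f b ≤ f a := hmono.monotoneOn hb ha h
    linarith
  have hsub : Set.Icc a b ⊆ Set.Ioo 0 N := fun x hx =>
    ⟨lt_of_lt_of_le ha.1 hx.1, lt_of_le_of_lt hx.2 hb.2⟩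
  have hcont' : ContinuousOn f (Set.Icc a b) := fun x hx =>
    (hcont x (hsub hx)).continuousWithinAt
  obtain ⟨S, hS, hfS⟩ := intermediate_value_Icc hab.le hcont' ⟨hfa.le, hfb.le⟩
  have hSmem : S ∈ Set.Ioo 0 N := hsub hS
  refine ⟨⟨S, ⟨hSmem, hfS⟩, ?_⟩, hmono⟩
  rintro y ⟨hy, hfy⟩
  exact hmono.injOn hy hSmem (hfy.trans hfS.symm)
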